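/- Fix N, D ≥ 1, reals r, δ > 0, and θ ∈ 𝕋^D such that Σ_{i=1}^D ‖dθᵢ‖_𝕋² > 2rδ for every integer d with 1 ≤ |d| ≤ N. Then for every μ ∈ (𝕋²)^D, the set A = {(x,y) ∈ [N]² : f_{θ,μ}(x,y) ∈ S_{r,δ;D}} is corner-free, where f_{θ,μ}(x,y) = ((xθ₁,yθ₁)+μ₁, …, (xθ_D,yθ_D)+μ_D) ∈ (𝕋²)^D. -/
import Mathlib


/-- `(x,y)` lands in `S_{r,δ;D}` under the affine map `f_{θ,μ,ν}`, expressed via the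
fractional-part representatives in `[0,1)²` of points of the 2-torus. -/
def inSrd (D : ℕ) (r δ : ℝ) (θ : Fin D → ℝ) (μ ν : Fin D → ℝ) (x y : ℤ) : Prop :=
  (∀ i : Fin D,
      Int.fract (x * θ i + μ i) + Int.fract (y * θ i + ν i) ∈ Set.Ico (1/2 : ℝ) (3/2)) ∧
  Real.sqrt (∑ i, (Int.fract (x * θ i + μ i) - Int.fract (y * θ i + ν i)) ^ 2)
    ∈ Set.Ico (r - δ) r

theorem construction_corner_free (N D : ℕ) (hN : 1 ≤ N) (hD : 1 ≤ D)
    (r δ : ℝ) (hr : 0 < r) (hδ : 0 < δ) (θ : Fin D → ℝ)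
    (hθ : ∀ d : ℤ, d ≠ 0 → |d| ≤ (N : ℤ) →
      2 * r * δ < ∑ i, ‖((d * θ i : ℝ) : AddCircle (1 : ℝ))‖ ^ 2)
    (μ ν : Fin D → ℝ) :
    ¬ ∃ x y d : ℤ, d ≠ 0 ∧
      ((x, y) ∈ Set.Icc (1 : ℤ) N ×ˢ Set.Icc (1 : ℤ) N ∧ inSrd D r δ θ μ ν x y) ∧
      ((x + d, y) ∈ Set.Icc (1 : ℤ) N ×ˢ Set.Icc (1 : ℤ) N ∧ inSrd D r δ θ μ ν (x + d) y) ∧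
      ((x, y + d) ∈ Set.Icc (1 : ℤ) N ×ˢ Set.Icc (1 : ℤ) N ∧ inSrd D r δ θ μ ν x (y + d)) := by
  rintro ⟨x, y, d, hd, ⟨hm1, h1⟩, ⟨hm2, h2⟩, ⟨hm3, h3⟩⟩
  simp only [Set.mem_prod, Set.mem_Icc] at hm1 hm2 hm3
  have hdN : |d| ≤ (N : ℤ) := by
    rw [abs_le]; omega
  set a : Fin D → ℝ := fun i => Int.fract (x * θ i + μ i) with ha
  set b : Fin D → ℝ := fun i => Int.fract (y * θ i + ν i) with hb
  set a' : Fin D → ℝ := fun i => Int.fract ((x + d : ℤ) * θ i + μ i) with ha'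
  set b' : Fin D → ℝ := fun i => Int.fract ((y + d : ℤ) * θ i + ν i) with hb'
  set ε : Fin D → ℝ := fun i => a' i - a i with hε
  -- ε i differs from d * θ i by an integer
  have hεk : ∀ i, ∃ k : ℤ, ε i = d * θ i + k := by
    intro i
    refine ⟨⌊(x : ℝ) * θ i + μ i⌋ - ⌊((x + d : ℤ) : ℝ) * θ i + μ i⌋, ?_⟩
    simp only [hε, ha, ha', Int.fract]
    push_cast
    ring
  have hηk : ∀ i, ∃ k : ℤ, b' i - b i = d * θ i + k := by
    intro i
    refine ⟨⌊(y : ℝ) * θ i + ν i⌋ - ⌊((y + d : ℤ) : ℝ) * θ i + ν i⌋, ?_⟩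
    simp only [hb, hb', Int.fract]
    push_cast
    ring
  -- key: b' i - b i = ε i
  have hbb : ∀ i, b' i - b i = ε i := by
    intro i
    obtain ⟨k, hk⟩ := hεk i
    obtain ⟨l, hl⟩ := hηk i
    have hA := h2.1 i
    have hB := h3.1 i
    simp only [Set.mem_Ico] at hA hB
    have hdiff : ε i - (b' i - b i) = (k : ℝ) - l := by rw [hk, hl]; ring
    have habs : |(k : ℝ) - l| < 1 := by
      rw [← hdiff]
      have e1 : ε i - (b' i - b i) = (a' i + b i) - (a i + b' i) := by simp [hε]; ring
      rw [e1, abs_lt]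
      constructor <;> nlinarith [hA.1, hA.2, hB.1, hB.2]
    have : k = l := by
      have h' : |(k - l : ℤ)| < 1 := by exact_mod_cast (by push_cast; exact habs : |((k - l : ℤ) : ℝ)| < 1)
      rw [abs_lt] at h'
      omega
    rw [hk, hl, this]
  -- norm bound
  have hnorm : ∀ i, ‖((d * θ i : ℝ) : AddCircle (1 : ℝ))‖ ≤ |ε i| := by
    intro i
    obtain ⟨k, hk⟩ := hεk i
    rw [AddCircle.norm_eq]
    simp only [inv_one, one_mul, mul_one]
    calc |(d : ℝ) * θ i - round ((d : ℝ) * θ i)| ≤ |(d : ℝ) * θ i - (-k : ℤ)| :=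
          round_le _ _
      _ = |ε i| := by rw [hk]; push_cast; ring_nf
  -- sums
  set S1 : ℝ := ∑ i, (a i - b i) ^ 2 with hS1
  set S2 : ℝ := ∑ i, (a' i - b i) ^ 2 with hS2
  set S3 : ℝ := ∑ i, (a i - b' i) ^ 2 with hS3
  have hsum : S2 + S3 = 2 * S1 + 2 * ∑ i, (ε i) ^ 2 := by
    rw [hS1, hS2, hS3, Finset.mul_sum, Finset.mul_sum, ← Finset.sum_add_distrib,
      ← Finset.sum_add_distrib]
    refine Finset.sum_congr rfl fun i _ => ?_
    have h1 : a' i = a i + ε i := by simp [hε]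
    have h2 : b' i = b i + ε i := by have := hbb i; linarith
    rw [h1, h2]; ring
  have hq1 : Real.sqrt S1 ^ 2 = S1 := Real.sq_sqrt (Finset.sum_nonneg fun i _ => sq_nonneg _)
  have hq2 : Real.sqrt S2 ^ 2 = S2 := Real.sq_sqrt (Finset.sum_nonneg fun i _ => sq_nonneg _)
  have hq3 : Real.sqrt S3 ^ 2 = S3 := Real.sq_sqrt (Finset.sum_nonneg fun i _ => sq_nonneg _)
  have hb1 : r - δ ≤ Real.sqrt S1 := h1.2.1
  have hb2 : Real.sqrt S2 < r := h2.2.2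
  have hb3 : Real.sqrt S3 < r := h3.2.2
  have hn1 : (0:ℝ) ≤ Real.sqrt S1 := Real.sqrt_nonneg _
  have hn2 : (0:ℝ) ≤ Real.sqrt S2 := Real.sqrt_nonneg _
  have hn3 : (0:ℝ) ≤ Real.sqrt S3 := Real.sqrt_nonneg _
  have hs1nn : (0:ℝ) ≤ S1 := Finset.sum_nonneg fun i _ => sq_nonneg _
  have hr2 : S2 < r ^ 2 := (Real.sqrt_lt' hr).mp hb2
  have hr3 : S3 < r ^ 2 := (Real.sqrt_lt' hr).mp hb3
  have h2S : 2 * ∑ i, (ε i) ^ 2 = S2 + S3 - 2 * S1 := by linarith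
  have hkey : ∑ i, (ε i) ^ 2 < 2 * r * δ := by
    rcases le_or_gt δ r with h | h
    · have hS1ge : (r - δ) ^ 2 ≤ S1 := by
        rw [← hq1]
        exact pow_le_pow_left₀ (by linarith) hb1 2
      have hexp : (r - δ) ^ 2 = r ^ 2 - 2 * r * δ + δ ^ 2 := by ring
      have hδ2 : 0 < δ ^ 2 := by positivity
      linarith
    · have hrr : r * r < r * (2 * δ) := by
        exact mul_lt_mul_of_pos_left (by linarith) hr
      have hpr : r ^ 2 = r * r := sq r
      linarith
  have hle : ∑ i, ‖((d * θ i : ℝ) : AddCircle (1 : ℝ))‖ ^ 2 ≤ ∑ i, (ε i) ^ 2 := by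
    refine Finset.sum_le_sum fun i _ => ?_
    have := hnorm i
    nlinarith [norm_nonneg ((d * θ i : ℝ) : AddCircle (1 : ℝ)), sq_abs (ε i)]
  have := hθ d hd hdN
  linarith
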